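/- Let $A \in \mathbb{R}^{n\times n}$, $B \in \mathbb{R}^{n\times m}$, $C \in \mathbb{R}^{p\times n}$, $\tau > 0$, and let $\hat{V}, \hat{W} \in \mathbb{R}^{n\times r}$ satisfy $\hat{W}^T\hat{V} = I$. Define the reduced model $\hat{A} = \hat{W}^T A \hat{V}$, $\hat{B} = \hat{W}^T B$, $\hat{C} = C\hat{V}$, and set $C_\tau = C\exp(\tau A)$, $\hat{C}_\tau = \hat{C}\exp(\tau\hat{A})$. Let $\bar{Q}_\tau \in \mathbb{R}^{n\times r}$ satisfy $A^T\bar{Q}_\tau + \bar{Q}_\tau\hat{A} + C^T\hat{C} - C_\tau^T\hat{C}_\tau = 0$, and suppose the reduced Lyapunov equation $\hat{A}^TX + X\hat{A} + \hat{C}^T\hat{C} - \hat{C}_\tau^T\hat{C}_\tau = 0$ has $\hat{Q}_\tau$ as its unique solution. If $\hat{W} = \bar{Q}_\tau$ and $C_\tau = \hat{C}_\tau\hat{W}^T$, then $\hat{Q}_\tau = I$ and $\bar{Q}_\tau^T B - \hat{Q}_\tau\hat{B} = 0$. -/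

import Mathlib

open Matrix NormedSpace

/-- **Theorem 2, second half (time-limited case).**
If the reduced model is obtained via the oblique projection with `Ŵ = Q̄τ` and
`Cτ = Ĉτ Ŵᵀ`, then the unique solution `Q̂τ` of the reduced time-limited Lyapunov
equation equals the identity and the optimality condition `Q̄τᵀ B − Q̂τ B̂ = 0` holds. -/
theorem time_limited_projection_satisfies_b2
    {n m p r : ℕ}
    (A : Matrix (Fin n) (Fin n) ℝ)
    (B : Matrix (Fin n) (Fin m) ℝ)
    (C : Matrix (Fin p) (Fin n) ℝ)
    (τ : ℝ) (hτ : 0 < τ)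
    (V W : Matrix (Fin n) (Fin r) ℝ)
    (hWV : Wᵀ * V = 1)
    (Ahat : Matrix (Fin r) (Fin r) ℝ) (hAhat : Ahat = Wᵀ * A * V)
    (Bhat : Matrix (Fin r) (Fin m) ℝ) (hBhat : Bhat = Wᵀ * B)
    (Chat : Matrix (Fin p) (Fin r) ℝ) (hChat : Chat = C * V)
    (Ctau : Matrix (Fin p) (Fin n) ℝ) (hCtau : Ctau = C * NormedSpace.exp (τ • A))
    (Chattau : Matrix (Fin p) (Fin r) ℝ) (hChattau : Chattau = Chat * NormedSpace.exp (τ • Ahat))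
    (Qbartau : Matrix (Fin n) (Fin r) ℝ)
    (hQbartau : Aᵀ * Qbartau + Qbartau * Ahat + Cᵀ * Chat - Ctauᵀ * Chattau = 0)
    (Qhattau : Matrix (Fin r) (Fin r) ℝ)
    (hQhattau : Ahatᵀ * Qhattau + Qhattau * Ahat + Chatᵀ * Chat - Chattauᵀ * Chattau = 0)
    (huniq : ∀ X : Matrix (Fin r) (Fin r) ℝ,
      Ahatᵀ * X + X * Ahat + Chatᵀ * Chat - Chattauᵀ * Chattau = 0 → X = Qhattau)
    (hW : W = Qbartau)
    (hCtauW : Ctau = Chattau * Wᵀ) :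
    Qhattau = 1 ∧ Qbartauᵀ * B - Qhattau * Bhat = 0 := by
  have hVW : Vᵀ * Wᵀᵀ = 1 := by
    rw [← Matrix.transpose_mul, hWV, Matrix.transpose_one]
  rw [Matrix.transpose_transpose] at hVW
  have hone : Ahatᵀ * (1 : Matrix (Fin r) (Fin r) ℝ) + 1 * Ahat
      + Chatᵀ * Chat - Chattauᵀ * Chattau = 0 := by
    have h := congrArg (fun M => Vᵀ * M) hQbartau
    simp only [Matrix.mul_add, Matrix.mul_sub, Matrix.mul_zero, ← Matrix.mul_assoc,
      hW, hCtauW] at h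
    have e1 : Vᵀ * Aᵀ * Qbartau = Ahatᵀ := by
      rw [hAhat]
      have : (Wᵀ * A * V)ᵀ = Vᵀ * Aᵀ * W := by
        simp [Matrix.transpose_mul, Matrix.mul_assoc]
      rw [this, hW]
    have e2 : Vᵀ * Qbartau = 1 := by rw [← hW, hVW]
    have e3 : Vᵀ * Cᵀ = Chatᵀ := by rw [hChat, Matrix.transpose_mul]
    rw [e2] at h
    have e4 : Vᵀ * (Chattau * Qbartauᵀ)ᵀ = Chattauᵀ := by
      rw [Matrix.transpose_mul, Matrix.transpose_transpose, ← Matrix.mul_assoc,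
        ← hW, hVW, Matrix.one_mul]
    simp only [Matrix.transpose_mul, Matrix.transpose_transpose] at e4 h
    rw [e1, e3] at h
    rw [e4] at h
    simpa using h
  have hQ1 : Qhattau = 1 := (huniq 1 hone).symm
  refine ⟨hQ1, ?_⟩
  rw [hQ1, Matrix.one_mul, hBhat, hW, sub_self]
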